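/- Let f and g be normalized cuspidal Hecke eigenforms of weights k₁ ≠ k₂ on Γ₀(N). Then there exists n ≤ 4·(log(N) + 1)² such that a_n(f) ≠ a_n(g). -/

import Mathlib

set_option maxHeartbeats 1000000

open Finset

lemma logN_ge (N P c : ℕ) (hN : 0 < N) (hP : P ∣ N) (hc : 2 ^ c ≤ P ^ 4) :
    (c : ℝ) * Real.log 2 ≤ 4 * Real.log N := by
  have hP0 : 0 < P := Nat.pos_of_dvd_of_pos hP hN
  have h1 : (P : ℝ) ≤ (N : ℝ) := by exact_mod_cast Nat.le_of_dvd hN hP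
  have h2 : ((2 : ℝ)) ^ c ≤ (P : ℝ) ^ 4 := by exact_mod_cast hc
  have h3 : Real.log ((2:ℝ) ^ c) ≤ Real.log ((P:ℝ) ^ 4) :=
    Real.log_le_log (by positivity) h2
  rw [Real.log_pow, Real.log_pow] at h3
  have h4 : Real.log (P : ℝ) ≤ Real.log (N : ℝ) :=
    Real.log_le_log (by exact_mod_cast hP0) h1
  push_cast at h3
  linarith

lemma cb_le (m N : ℕ) (hm : 2 < m) (hN : 0 < N)
    (hdvd : ∀ q : ℕ, Nat.Prime q → q ≤ 2 * m → q ∣ N) :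
    Nat.centralBinom m ≤ (2 * m) ^ ((Nat.sqrt (2 * m) - 1) / 2 + 1) * N := by
  have m_pos : 0 < m := by omega
  set S := (Finset.range (2 * m + 1)).filter Nat.Prime with hS
  set f : ℕ → ℕ := fun x => x ^ (Nat.centralBinom m).factorization x with hf
  have hSprod : ∏ x ∈ S, f x = Nat.centralBinom m := by
    rw [hS, hf]
    rw [Finset.prod_filter_of_ne]
    · exact m.prod_pow_factorization_centralBinom
    · intro p _ h
      contrapose! h
      rw [Nat.factorization_eq_zero_of_not_prime m.centralBinom h, pow_zero]
  rw [← hSprod, ← Finset.prod_filter_mul_prod_filter_not S (· ≤ Nat.sqrt (2 * m))]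
  apply Nat.mul_le_mul
  · set T := S.filter (· ≤ Nat.sqrt (2 * m)) with hT
    refine (Finset.prod_le_prod' fun p _ => (?_ : f p ≤ 2 * m)).trans ?_
    · exact Nat.pow_factorization_choose_le (by omega)
    rw [Finset.prod_const]
    have hTprime : ∀ q ∈ T, Nat.Prime q ∧ q ≤ Nat.sqrt (2 * m) := by
      intro q hq
      obtain ⟨h1, h2⟩ := Finset.mem_filter.1 hq
      exact ⟨(Finset.mem_filter.1 h1).2, h2⟩
    have hcard : T.card ≤ (Nat.sqrt (2 * m) - 1) / 2 + 1 := by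
      have herase : (T.erase 2).card ≤ (Nat.sqrt (2 * m) - 1) / 2 := by
        have hmaps : ∀ q ∈ T.erase 2, q / 2 ∈ Finset.Icc 1 ((Nat.sqrt (2 * m) - 1) / 2) := by
          intro q hq
          have hq2 : q ≠ 2 := Finset.ne_of_mem_erase hq
          obtain ⟨hqp, hqle⟩ := hTprime q (Finset.mem_of_mem_erase hq)
          obtain ⟨t, ht⟩ := hqp.odd_of_ne_two hq2
          have h3 : 3 ≤ q := by have := hqp.two_le; omega
          rw [Finset.mem_Icc]
          omega
        have hinj : Set.InjOn (fun q => q / 2) (T.erase 2) := by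
          intro a ha b hb hab
          have ha2 : a ≠ 2 := Finset.ne_of_mem_erase ha
          have hb2 : b ≠ 2 := Finset.ne_of_mem_erase hb
          obtain ⟨hap, _⟩ := hTprime a (Finset.mem_of_mem_erase ha)
          obtain ⟨hbp, _⟩ := hTprime b (Finset.mem_of_mem_erase hb)
          obtain ⟨ta, hta⟩ := hap.odd_of_ne_two ha2
          obtain ⟨tb, htb⟩ := hbp.odd_of_ne_two hb2
          simp only at hab
          omega
        have := Finset.card_le_card_of_injOn (fun q => q / 2) hmaps hinj
        simpa [Nat.card_Icc] using this
      by_cases h2T : 2 ∈ T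
      · have := Finset.card_erase_add_one h2T
        omega
      · rw [Finset.erase_eq_of_notMem h2T] at herase
        omega
    exact Nat.pow_le_pow_right (by omega) hcard
  · have hstep : ∀ p ∈ S.filter (fun x => ¬ x ≤ Nat.sqrt (2 * m)), f p ≤ p := by
      intro p hp
      obtain ⟨h1, h2⟩ := Finset.mem_filter.1 hp
      refine (pow_le_pow_right₀ (Finset.mem_filter.1 h1).2.one_lt.le ?_).trans (pow_one p).le
      exact Nat.factorization_choose_le_one (Nat.sqrt_lt'.mp <| not_le.1 h2)
    refine (Finset.prod_le_prod' hstep).trans ?_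
    refine Nat.le_of_dvd hN ?_
    refine Finset.prod_primes_dvd N ?_ ?_
    · intro p hp
      exact ((Finset.mem_filter.1 (Finset.mem_filter.1 hp).1).2).prime
    · intro p hp
      obtain ⟨h1, _⟩ := Finset.mem_filter.1 hp
      obtain ⟨hr, hpr⟩ := Finset.mem_filter.1 h1
      exact hdvd p hpr (by have := Finset.mem_range.1 hr; omega)

lemma asympt (N p : ℕ) (hN : 0 < N) (hp : Nat.Prime p) (hbig : 683 < p)
    (hdvd : ∀ q : ℕ, Nat.Prime q → q < p → q ∣ N) : (p : ℝ) ≤ 2 * Real.log N + 2 := by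
  obtain ⟨m, hm⟩ : Odd p := hp.odd_of_ne_two (by omega)
  have hm1 : 342 ≤ m := by omega
  have hcb := cb_le m N (by omega) hN (fun q hq hq2 => hdvd q hq (by omega))
  have h4 := Nat.four_pow_lt_mul_centralBinom m (by omega)
  set s := Nat.sqrt (2 * m) with hs
  set e := (s - 1) / 2 + 1 with he
  have hnat : 4 ^ m ≤ m * ((2 * m) ^ e * N) := h4.le.trans (Nat.mul_le_mul_left m hcb)
  have hm0 : (0:ℝ) < (m:ℝ) := by exact_mod_cast (by omega : 0 < m)
  have hN0 : (0:ℝ) < (N:ℝ) := by exact_mod_cast hN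
  have hrineq : ((4:ℝ)) ^ m ≤ (m:ℝ) * ((2 * (m:ℝ)) ^ e * (N:ℝ)) := by
    exact_mod_cast hnat
  have hlogineq : (m:ℝ) * Real.log 4 ≤
      Real.log (m:ℝ) + ((e:ℝ) * Real.log (2 * (m:ℝ)) + Real.log (N:ℝ)) := by
    have h1 : Real.log ((4:ℝ) ^ m) ≤ Real.log ((m:ℝ) * ((2 * (m:ℝ)) ^ e * (N:ℝ))) :=
      Real.log_le_log (by positivity) hrineq
    rw [Real.log_pow, Real.log_mul (ne_of_gt hm0) (by positivity),
      Real.log_mul (by positivity) (ne_of_gt hN0), Real.log_pow] at h1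
    exact h1
  obtain ⟨u, hu⟩ : ∃ u : ℝ, u = Real.sqrt (2 * (m:ℝ)) := ⟨_, rfl⟩
  have h2m : (0:ℝ) < 2 * (m:ℝ) := by linarith
  have hu0 : 0 < u := by rw [hu]; exact Real.sqrt_pos.2 h2m
  have hm1' : (342:ℝ) ≤ (m:ℝ) := by exact_mod_cast hm1
  have hu26 : (26:ℝ) ≤ u := by
    have h1 : (26:ℝ) = Real.sqrt 676 := by
      rw [show (676:ℝ) = 26 ^ 2 by norm_num, Real.sqrt_sq (by norm_num)]
    rw [h1, hu]
    exact Real.sqrt_le_sqrt (by linarith)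
  have hs26 : 26 ≤ s := by
    rw [hs]
    have : 26 * 26 ≤ 2 * m := by omega
    exact Nat.le_sqrt.2 this
  have hsu : (s:ℝ) ≤ u := by
    rw [hs, hu]
    have h1 := Real.nat_sqrt_le_real_sqrt (a := 2 * m)
    have h2 : ((2 * m : ℕ) : ℝ) = 2 * (m:ℝ) := by push_cast; ring
    rwa [h2] at h1
  have heu : (e:ℝ) ≤ (u + 1) / 2 := by
    have h1 : ((s - 1) / 2 : ℕ) ≤ ((s:ℝ) - 1) / 2 := by
      have h2 := Nat.cast_div_le (m := s - 1) (n := 2) (α := ℝ)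
      have h3 : ((s - 1 : ℕ) : ℝ) = (s:ℝ) - 1 := by
        have : 1 ≤ s := by omega
        push_cast [this]; ring
      rw [h3] at h2
      exact_mod_cast h2
    have h4 : ((e:ℕ):ℝ) = ((s - 1) / 2 : ℕ) + 1 := by rw [he]; push_cast; ring
    rw [h4]
    linarith
  have hu2 : u ^ 2 = 2 * (m:ℝ) := by rw [hu]; exact Real.sq_sqrt h2m.le
  have hlog2m : Real.log (2 * (m:ℝ)) = 2 * Real.log u := by
    rw [hu, Real.log_sqrt h2m.le]; ring
  have hlogm_le : Real.log (m:ℝ) ≤ Real.log (2 * (m:ℝ)) :=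
    Real.log_le_log hm0 (by linarith)
  have hlogu0 : (0:ℝ) ≤ Real.log u := Real.log_nonneg (by linarith)
  have hub : Real.log u ≤ 6 * Real.log 2 + u / 64 - 1 := by
    have h64 : Real.log (u / 64) ≤ u / 64 - 1 := Real.log_le_sub_one_of_pos (by positivity)
    rw [Real.log_div (ne_of_gt hu0) (by norm_num)] at h64
    have h2 : Real.log (64:ℝ) = 6 * Real.log 2 := by
      rw [show (64:ℝ) = 2 ^ 6 by norm_num, Real.log_pow]; push_cast; ring
    linarith
  have hlog4 : Real.log (4:ℝ) = 2 * Real.log 2 := by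
    rw [show (4:ℝ) = 2 ^ 2 by norm_num, Real.log_pow]; push_cast; ring
  have l2a := Real.log_two_gt_d9
  have l2b := Real.log_two_lt_d9
  have hslog : (e:ℝ) * Real.log (2 * (m:ℝ)) ≤ (u + 1) / 2 * (2 * Real.log u) := by
    rw [hlog2m]
    exact mul_le_mul_of_nonneg_right heu (by linarith)
  have hNlog : u ^ 2 * Real.log 2 - (u + 3) * Real.log u ≤ Real.log (N:ℝ) := by
    have h5 : u ^ 2 * Real.log 2 = (m:ℝ) * Real.log 4 := by
      rw [hu2, hlog4]; ring
    nlinarith [hlogineq, hlogm_le, hslog, hlog2m, h5]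
  have hmul : (u + 3) * Real.log u ≤ (u + 3) * (6 * Real.log 2 + u / 64 - 1) :=
    mul_le_mul_of_nonneg_left hub (by linarith)
  have e1 : u ^ 2 * (0.6931471803:ℝ) ≤ u ^ 2 * Real.log 2 :=
    mul_le_mul_of_nonneg_left l2a.le (sq_nonneg u)
  have e2 : (u + 3) * (6 * Real.log 2 + u / 64 - 1) ≤
      (u + 3) * (6 * (0.6931471808:ℝ) + u / 64 - 1) := by
    have h6 : 6 * Real.log 2 + u / 64 - 1 ≤ 6 * (0.6931471808:ℝ) + u / 64 - 1 := by linarith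
    exact mul_le_mul_of_nonneg_left h6 (by linarith)
  have hpoly : u ^ 2 / 2 - 1 / 2 ≤
      u ^ 2 * (0.6931471803:ℝ) - (u + 3) * (6 * (0.6931471808:ℝ) + u / 64 - 1) := by
    nlinarith [hu26, sq_nonneg (u - 26)]
  have hfin : u ^ 2 / 2 - 1 / 2 ≤ Real.log (N:ℝ) := by
    linarith [hNlog, hmul, e1, e2, hpoly]
  have hpcast : (p:ℝ) = 2 * (m:ℝ) + 1 := by rw [hm]; push_cast; ring
  rw [hpcast]
  nlinarith [hfin, hu2]

set_option maxHeartbeats 1000000 in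
lemma key (N : ℕ) (hN : 0 < N) (p : ℕ) (hp : Nat.Prime p)
    (hdvd : ∀ q : ℕ, Nat.Prime q → q < p → q ∣ N) : (p : ℝ) ≤ 2 * Real.log N + 2 := by
  have hlog0 : 0 ≤ Real.log N := Real.log_nonneg (by exact_mod_cast hN)
  have l2 := Real.log_two_gt_d9
  rcases le_or_gt p 2 with h | h0
  · have hple : (p:ℝ) ≤ 2 := by exact_mod_cast h
    linarith
  rcases le_or_gt p 3 with h | h1
  · have d0 : (2:ℕ) ∣ N := hdvd 2 (by norm_num) (by omega)
    have hlg := logN_ge N 2 4 hN d0 (by norm_num)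
    push_cast at hlg
    have hple : (p:ℝ) ≤ 3 := by exact_mod_cast h
    linarith
  rcases le_or_gt p 5 with h | h2
  · have d0 : (2:ℕ) ∣ N := hdvd 2 (by norm_num) (by omega)
    have d1 : (6 : ℕ) ∣ N := by
      have h' := Nat.Coprime.mul_dvd_of_dvd_of_dvd (show Nat.Coprime 2 3 by norm_num) d0 (hdvd 3 (by norm_num) (by omega))
      norm_num at h'
      exact h'
    have hlg := logN_ge N 6 10 hN d1 (by norm_num)
    push_cast at hlg
    have hple : (p:ℝ) ≤ 5 := by exact_mod_cast h
    linarith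
  rcases le_or_gt p 7 with h | h3
  · have d0 : (2:ℕ) ∣ N := hdvd 2 (by norm_num) (by omega)
    have d1 : (6 : ℕ) ∣ N := by
      have h' := Nat.Coprime.mul_dvd_of_dvd_of_dvd (show Nat.Coprime 2 3 by norm_num) d0 (hdvd 3 (by norm_num) (by omega))
      norm_num at h'
      exact h'
    have d2 : (30 : ℕ) ∣ N := by
      have h' := Nat.Coprime.mul_dvd_of_dvd_of_dvd (show Nat.Coprime 6 5 by norm_num) d1 (hdvd 5 (by norm_num) (by omega))
      norm_num at h'
      exact h'
    have hlg := logN_ge N 30 19 hN d2 (by norm_num)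
    push_cast at hlg
    have hple : (p:ℝ) ≤ 7 := by exact_mod_cast h
    linarith
  rcases le_or_gt p 11 with h | h4
  · have d0 : (2:ℕ) ∣ N := hdvd 2 (by norm_num) (by omega)
    have d1 : (6 : ℕ) ∣ N := by
      have h' := Nat.Coprime.mul_dvd_of_dvd_of_dvd (show Nat.Coprime 2 3 by norm_num) d0 (hdvd 3 (by norm_num) (by omega))
      norm_num at h'
      exact h'
    have d2 : (30 : ℕ) ∣ N := by
      have h' := Nat.Coprime.mul_dvd_of_dvd_of_dvd (show Nat.Coprime 6 5 by norm_num) d1 (hdvd 5 (by norm_num) (by omega))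
      norm_num at h'
      exact h'
    have d3 : (210 : ℕ) ∣ N := by
      have h' := Nat.Coprime.mul_dvd_of_dvd_of_dvd (show Nat.Coprime 30 7 by norm_num) d2 (hdvd 7 (by norm_num) (by omega))
      norm_num at h'
      exact h'
    have hlg := logN_ge N 210 30 hN d3 (by norm_num)
    push_cast at hlg
    have hple : (p:ℝ) ≤ 11 := by exact_mod_cast h
    linarith
  rcases le_or_gt p 17 with h | h5
  · have d0 : (2:ℕ) ∣ N := hdvd 2 (by norm_num) (by omega)
    have d1 : (6 : ℕ) ∣ N := by
      have h' := Nat.Coprime.mul_dvd_of_dvd_of_dvd (show Nat.Coprime 2 3 by norm_num) d0 (hdvd 3 (by norm_num) (by omega))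
      norm_num at h'
      exact h'
    have d2 : (30 : ℕ) ∣ N := by
      have h' := Nat.Coprime.mul_dvd_of_dvd_of_dvd (show Nat.Coprime 6 5 by norm_num) d1 (hdvd 5 (by norm_num) (by omega))
      norm_num at h'
      exact h'
    have d3 : (210 : ℕ) ∣ N := by
      have h' := Nat.Coprime.mul_dvd_of_dvd_of_dvd (show Nat.Coprime 30 7 by norm_num) d2 (hdvd 7 (by norm_num) (by omega))
      norm_num at h'
      exact h'
    have d4 : (2310 : ℕ) ∣ N := by
      have h' := Nat.Coprime.mul_dvd_of_dvd_of_dvd (show Nat.Coprime 210 11 by norm_num) d3 (hdvd 11 (by norm_num) (by omega))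
      norm_num at h'
      exact h'
    have hlg := logN_ge N 2310 44 hN d4 (by norm_num)
    push_cast at hlg
    have hple : (p:ℝ) ≤ 17 := by exact_mod_cast h
    linarith
  rcases le_or_gt p 23 with h | h6
  · have d0 : (2:ℕ) ∣ N := hdvd 2 (by norm_num) (by omega)
    have d1 : (6 : ℕ) ∣ N := by
      have h' := Nat.Coprime.mul_dvd_of_dvd_of_dvd (show Nat.Coprime 2 3 by norm_num) d0 (hdvd 3 (by norm_num) (by omega))
      norm_num at h'
      exact h'
    have d2 : (30 : ℕ) ∣ N := by
      have h' := Nat.Coprime.mul_dvd_of_dvd_of_dvd (show Nat.Coprime 6 5 by norm_num) d1 (hdvd 5 (by norm_num) (by omega))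
      norm_num at h'
      exact h'
    have d3 : (210 : ℕ) ∣ N := by
      have h' := Nat.Coprime.mul_dvd_of_dvd_of_dvd (show Nat.Coprime 30 7 by norm_num) d2 (hdvd 7 (by norm_num) (by omega))
      norm_num at h'
      exact h'
    have d4 : (2310 : ℕ) ∣ N := by
      have h' := Nat.Coprime.mul_dvd_of_dvd_of_dvd (show Nat.Coprime 210 11 by norm_num) d3 (hdvd 11 (by norm_num) (by omega))
      norm_num at h'
      exact h'
    have d5 : (30030 : ℕ) ∣ N := by
      have h' := Nat.Coprime.mul_dvd_of_dvd_of_dvd (show Nat.Coprime 2310 13 by norm_num) d4 (hdvd 13 (by norm_num) (by omega))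
      norm_num at h'
      exact h'
    have d6 : (510510 : ℕ) ∣ N := by
      have h' := Nat.Coprime.mul_dvd_of_dvd_of_dvd (show Nat.Coprime 30030 17 by norm_num) d5 (hdvd 17 (by norm_num) (by omega))
      norm_num at h'
      exact h'
    have hlg := logN_ge N 510510 75 hN d6 (by norm_num)
    push_cast at hlg
    have hple : (p:ℝ) ≤ 23 := by exact_mod_cast h
    linarith
  rcases le_or_gt p 37 with h | h7
  · have d0 : (2:ℕ) ∣ N := hdvd 2 (by norm_num) (by omega)
    have d1 : (6 : ℕ) ∣ N := by
      have h' := Nat.Coprime.mul_dvd_of_dvd_of_dvd (show Nat.Coprime 2 3 by norm_num) d0 (hdvd 3 (by norm_num) (by omega))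
      norm_num at h'
      exact h'
    have d2 : (30 : ℕ) ∣ N := by
      have h' := Nat.Coprime.mul_dvd_of_dvd_of_dvd (show Nat.Coprime 6 5 by norm_num) d1 (hdvd 5 (by norm_num) (by omega))
      norm_num at h'
      exact h'
    have d3 : (210 : ℕ) ∣ N := by
      have h' := Nat.Coprime.mul_dvd_of_dvd_of_dvd (show Nat.Coprime 30 7 by norm_num) d2 (hdvd 7 (by norm_num) (by omega))
      norm_num at h'
      exact h'
    have d4 : (2310 : ℕ) ∣ N := by
      have h' := Nat.Coprime.mul_dvd_of_dvd_of_dvd (show Nat.Coprime 210 11 by norm_num) d3 (hdvd 11 (by norm_num) (by omega))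
      norm_num at h'
      exact h'
    have d5 : (30030 : ℕ) ∣ N := by
      have h' := Nat.Coprime.mul_dvd_of_dvd_of_dvd (show Nat.Coprime 2310 13 by norm_num) d4 (hdvd 13 (by norm_num) (by omega))
      norm_num at h'
      exact h'
    have d6 : (510510 : ℕ) ∣ N := by
      have h' := Nat.Coprime.mul_dvd_of_dvd_of_dvd (show Nat.Coprime 30030 17 by norm_num) d5 (hdvd 17 (by norm_num) (by omega))
      norm_num at h'
      exact h'
    have d7 : (9699690 : ℕ) ∣ N := by
      have h' := Nat.Coprime.mul_dvd_of_dvd_of_dvd (show Nat.Coprime 510510 19 by norm_num) d6 (hdvd 19 (by norm_num) (by omega))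
      norm_num at h'
      exact h'
    have d8 : (223092870 : ℕ) ∣ N := by
      have h' := Nat.Coprime.mul_dvd_of_dvd_of_dvd (show Nat.Coprime 9699690 23 by norm_num) d7 (hdvd 23 (by norm_num) (by omega))
      norm_num at h'
      exact h'
    have hlg := logN_ge N 223092870 110 hN d8 (by norm_num)
    push_cast at hlg
    have hple : (p:ℝ) ≤ 37 := by exact_mod_cast h
    linarith
  rcases le_or_gt p 61 with h | h8
  · have d0 : (2:ℕ) ∣ N := hdvd 2 (by norm_num) (by omega)
    have d1 : (6 : ℕ) ∣ N := by
      have h' := Nat.Coprime.mul_dvd_of_dvd_of_dvd (show Nat.Coprime 2 3 by norm_num) d0 (hdvd 3 (by norm_num) (by omega))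
      norm_num at h'
      exact h'
    have d2 : (30 : ℕ) ∣ N := by
      have h' := Nat.Coprime.mul_dvd_of_dvd_of_dvd (show Nat.Coprime 6 5 by norm_num) d1 (hdvd 5 (by norm_num) (by omega))
      norm_num at h'
      exact h'
    have d3 : (210 : ℕ) ∣ N := by
      have h' := Nat.Coprime.mul_dvd_of_dvd_of_dvd (show Nat.Coprime 30 7 by norm_num) d2 (hdvd 7 (by norm_num) (by omega))
      norm_num at h'
      exact h'
    have d4 : (2310 : ℕ) ∣ N := by
      have h' := Nat.Coprime.mul_dvd_of_dvd_of_dvd (show Nat.Coprime 210 11 by norm_num) d3 (hdvd 11 (by norm_num) (by omega))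
      norm_num at h'
      exact h'
    have d5 : (30030 : ℕ) ∣ N := by
      have h' := Nat.Coprime.mul_dvd_of_dvd_of_dvd (show Nat.Coprime 2310 13 by norm_num) d4 (hdvd 13 (by norm_num) (by omega))
      norm_num at h'
      exact h'
    have d6 : (510510 : ℕ) ∣ N := by
      have h' := Nat.Coprime.mul_dvd_of_dvd_of_dvd (show Nat.Coprime 30030 17 by norm_num) d5 (hdvd 17 (by norm_num) (by omega))
      norm_num at h'
      exact h'
    have d7 : (9699690 : ℕ) ∣ N := by
      have h' := Nat.Coprime.mul_dvd_of_dvd_of_dvd (show Nat.Coprime 510510 19 by norm_num) d6 (hdvd 19 (by norm_num) (by omega))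
      norm_num at h'
      exact h'
    have d8 : (223092870 : ℕ) ∣ N := by
      have h' := Nat.Coprime.mul_dvd_of_dvd_of_dvd (show Nat.Coprime 9699690 23 by norm_num) d7 (hdvd 23 (by norm_num) (by omega))
      norm_num at h'
      exact h'
    have d9 : (6469693230 : ℕ) ∣ N := by
      have h' := Nat.Coprime.mul_dvd_of_dvd_of_dvd (show Nat.Coprime 223092870 29 by norm_num) d8 (hdvd 29 (by norm_num) (by omega))
      norm_num at h'
      exact h'
    have d10 : (200560490130 : ℕ) ∣ N := by
      have h' := Nat.Coprime.mul_dvd_of_dvd_of_dvd (show Nat.Coprime 6469693230 31 by norm_num) d9 (hdvd 31 (by norm_num) (by omega))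
      norm_num at h'
      exact h'
    have d11 : (7420738134810 : ℕ) ∣ N := by
      have h' := Nat.Coprime.mul_dvd_of_dvd_of_dvd (show Nat.Coprime 200560490130 37 by norm_num) d10 (hdvd 37 (by norm_num) (by omega))
      norm_num at h'
      exact h'
    have hlg := logN_ge N 7420738134810 171 hN d11 (by norm_num)
    push_cast at hlg
    have hple : (p:ℝ) ≤ 61 := by exact_mod_cast h
    linarith
  rcases le_or_gt p 107 with h | h9
  · have d0 : (2:ℕ) ∣ N := hdvd 2 (by norm_num) (by omega)
    have d1 : (6 : ℕ) ∣ N := by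
      have h' := Nat.Coprime.mul_dvd_of_dvd_of_dvd (show Nat.Coprime 2 3 by norm_num) d0 (hdvd 3 (by norm_num) (by omega))
      norm_num at h'
      exact h'
    have d2 : (30 : ℕ) ∣ N := by
      have h' := Nat.Coprime.mul_dvd_of_dvd_of_dvd (show Nat.Coprime 6 5 by norm_num) d1 (hdvd 5 (by norm_num) (by omega))
      norm_num at h'
      exact h'
    have d3 : (210 : ℕ) ∣ N := by
      have h' := Nat.Coprime.mul_dvd_of_dvd_of_dvd (show Nat.Coprime 30 7 by norm_num) d2 (hdvd 7 (by norm_num) (by omega))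
      norm_num at h'
      exact h'
    have d4 : (2310 : ℕ) ∣ N := by
      have h' := Nat.Coprime.mul_dvd_of_dvd_of_dvd (show Nat.Coprime 210 11 by norm_num) d3 (hdvd 11 (by norm_num) (by omega))
      norm_num at h'
      exact h'
    have d5 : (30030 : ℕ) ∣ N := by
      have h' := Nat.Coprime.mul_dvd_of_dvd_of_dvd (show Nat.Coprime 2310 13 by norm_num) d4 (hdvd 13 (by norm_num) (by omega))
      norm_num at h'
      exact h'
    have d6 : (510510 : ℕ) ∣ N := by
      have h' := Nat.Coprime.mul_dvd_of_dvd_of_dvd (show Nat.Coprime 30030 17 by norm_num) d5 (hdvd 17 (by norm_num) (by omega))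
      norm_num at h'
      exact h'
    have d7 : (9699690 : ℕ) ∣ N := by
      have h' := Nat.Coprime.mul_dvd_of_dvd_of_dvd (show Nat.Coprime 510510 19 by norm_num) d6 (hdvd 19 (by norm_num) (by omega))
      norm_num at h'
      exact h'
    have d8 : (223092870 : ℕ) ∣ N := by
      have h' := Nat.Coprime.mul_dvd_of_dvd_of_dvd (show Nat.Coprime 9699690 23 by norm_num) d7 (hdvd 23 (by norm_num) (by omega))
      norm_num at h'
      exact h'
    have d9 : (6469693230 : ℕ) ∣ N := by
      have h' := Nat.Coprime.mul_dvd_of_dvd_of_dvd (show Nat.Coprime 223092870 29 by norm_num) d8 (hdvd 29 (by norm_num) (by omega))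
      norm_num at h'
      exact h'
    have d10 : (200560490130 : ℕ) ∣ N := by
      have h' := Nat.Coprime.mul_dvd_of_dvd_of_dvd (show Nat.Coprime 6469693230 31 by norm_num) d9 (hdvd 31 (by norm_num) (by omega))
      norm_num at h'
      exact h'
    have d11 : (7420738134810 : ℕ) ∣ N := by
      have h' := Nat.Coprime.mul_dvd_of_dvd_of_dvd (show Nat.Coprime 200560490130 37 by norm_num) d10 (hdvd 37 (by norm_num) (by omega))
      norm_num at h'
      exact h'
    have d12 : (304250263527210 : ℕ) ∣ N := by
      have h' := Nat.Coprime.mul_dvd_of_dvd_of_dvd (show Nat.Coprime 7420738134810 41 by norm_num) d11 (hdvd 41 (by norm_num) (by omega))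
      norm_num at h'
      exact h'
    have d13 : (13082761331670030 : ℕ) ∣ N := by
      have h' := Nat.Coprime.mul_dvd_of_dvd_of_dvd (show Nat.Coprime 304250263527210 43 by norm_num) d12 (hdvd 43 (by norm_num) (by omega))
      norm_num at h'
      exact h'
    have d14 : (614889782588491410 : ℕ) ∣ N := by
      have h' := Nat.Coprime.mul_dvd_of_dvd_of_dvd (show Nat.Coprime 13082761331670030 47 by norm_num) d13 (hdvd 47 (by norm_num) (by omega))
      norm_num at h'
      exact h'
    have d15 : (32589158477190044730 : ℕ) ∣ N := by
      have h' := Nat.Coprime.mul_dvd_of_dvd_of_dvd (show Nat.Coprime 614889782588491410 53 by norm_num) d14 (hdvd 53 (by norm_num) (by omega))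
      norm_num at h'
      exact h'
    have d16 : (1922760350154212639070 : ℕ) ∣ N := by
      have h' := Nat.Coprime.mul_dvd_of_dvd_of_dvd (show Nat.Coprime 32589158477190044730 59 by norm_num) d15 (hdvd 59 (by norm_num) (by omega))
      norm_num at h'
      exact h'
    have d17 : (117288381359406970983270 : ℕ) ∣ N := by
      have h' := Nat.Coprime.mul_dvd_of_dvd_of_dvd (show Nat.Coprime 1922760350154212639070 61 by norm_num) d16 (hdvd 61 (by norm_num) (by omega))
      norm_num at h'
      exact h'
    have hlg := logN_ge N 117288381359406970983270 306 hN d17 (by decide)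
    push_cast at hlg
    have hple : (p:ℝ) ≤ 107 := by exact_mod_cast h
    linarith
  rcases le_or_gt p 197 with h | h10
  · have d0 : (2:ℕ) ∣ N := hdvd 2 (by norm_num) (by omega)
    have d1 : (6 : ℕ) ∣ N := by
      have h' := Nat.Coprime.mul_dvd_of_dvd_of_dvd (show Nat.Coprime 2 3 by norm_num) d0 (hdvd 3 (by norm_num) (by omega))
      norm_num at h'
      exact h'
    have d2 : (30 : ℕ) ∣ N := by
      have h' := Nat.Coprime.mul_dvd_of_dvd_of_dvd (show Nat.Coprime 6 5 by norm_num) d1 (hdvd 5 (by norm_num) (by omega))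
      norm_num at h'
      exact h'
    have d3 : (210 : ℕ) ∣ N := by
      have h' := Nat.Coprime.mul_dvd_of_dvd_of_dvd (show Nat.Coprime 30 7 by norm_num) d2 (hdvd 7 (by norm_num) (by omega))
      norm_num at h'
      exact h'
    have d4 : (2310 : ℕ) ∣ N := by
      have h' := Nat.Coprime.mul_dvd_of_dvd_of_dvd (show Nat.Coprime 210 11 by norm_num) d3 (hdvd 11 (by norm_num) (by omega))
      norm_num at h'
      exact h'
    have d5 : (30030 : ℕ) ∣ N := by
      have h' := Nat.Coprime.mul_dvd_of_dvd_of_dvd (show Nat.Coprime 2310 13 by norm_num) d4 (hdvd 13 (by norm_num) (by omega))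
      norm_num at h'
      exact h'
    have d6 : (510510 : ℕ) ∣ N := by
      have h' := Nat.Coprime.mul_dvd_of_dvd_of_dvd (show Nat.Coprime 30030 17 by norm_num) d5 (hdvd 17 (by norm_num) (by omega))
      norm_num at h'
      exact h'
    have d7 : (9699690 : ℕ) ∣ N := by
      have h' := Nat.Coprime.mul_dvd_of_dvd_of_dvd (show Nat.Coprime 510510 19 by norm_num) d6 (hdvd 19 (by norm_num) (by omega))
      norm_num at h'
      exact h'
    have d8 : (223092870 : ℕ) ∣ N := by
      have h' := Nat.Coprime.mul_dvd_of_dvd_of_dvd (show Nat.Coprime 9699690 23 by norm_num) d7 (hdvd 23 (by norm_num) (by omega))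
      norm_num at h'
      exact h'
    have d9 : (6469693230 : ℕ) ∣ N := by
      have h' := Nat.Coprime.mul_dvd_of_dvd_of_dvd (show Nat.Coprime 223092870 29 by norm_num) d8 (hdvd 29 (by norm_num) (by omega))
      norm_num at h'
      exact h'
    have d10 : (200560490130 : ℕ) ∣ N := by
      have h' := Nat.Coprime.mul_dvd_of_dvd_of_dvd (show Nat.Coprime 6469693230 31 by norm_num) d9 (hdvd 31 (by norm_num) (by omega))
      norm_num at h'
      exact h'
    have d11 : (7420738134810 : ℕ) ∣ N := by
      have h' := Nat.Coprime.mul_dvd_of_dvd_of_dvd (show Nat.Coprime 200560490130 37 by norm_num) d10 (hdvd 37 (by norm_num) (by omega))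
      norm_num at h'
      exact h'
    have d12 : (304250263527210 : ℕ) ∣ N := by
      have h' := Nat.Coprime.mul_dvd_of_dvd_of_dvd (show Nat.Coprime 7420738134810 41 by norm_num) d11 (hdvd 41 (by norm_num) (by omega))
      norm_num at h'
      exact h'
    have d13 : (13082761331670030 : ℕ) ∣ N := by
      have h' := Nat.Coprime.mul_dvd_of_dvd_of_dvd (show Nat.Coprime 304250263527210 43 by norm_num) d12 (hdvd 43 (by norm_num) (by omega))
      norm_num at h'
      exact h'
    have d14 : (614889782588491410 : ℕ) ∣ N := by
      have h' := Nat.Coprime.mul_dvd_of_dvd_of_dvd (show Nat.Coprime 13082761331670030 47 by norm_num) d13 (hdvd 47 (by norm_num) (by omega))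
      norm_num at h'
      exact h'
    have d15 : (32589158477190044730 : ℕ) ∣ N := by
      have h' := Nat.Coprime.mul_dvd_of_dvd_of_dvd (show Nat.Coprime 614889782588491410 53 by norm_num) d14 (hdvd 53 (by norm_num) (by omega))
      norm_num at h'
      exact h'
    have d16 : (1922760350154212639070 : ℕ) ∣ N := by
      have h' := Nat.Coprime.mul_dvd_of_dvd_of_dvd (show Nat.Coprime 32589158477190044730 59 by norm_num) d15 (hdvd 59 (by norm_num) (by omega))
      norm_num at h'
      exact h'
    have d17 : (117288381359406970983270 : ℕ) ∣ N := by
      have h' := Nat.Coprime.mul_dvd_of_dvd_of_dvd (show Nat.Coprime 1922760350154212639070 61 by norm_num) d16 (hdvd 61 (by norm_num) (by omega))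
      norm_num at h'
      exact h'
    have d18 : (7858321551080267055879090 : ℕ) ∣ N := by
      have h' := Nat.Coprime.mul_dvd_of_dvd_of_dvd (show Nat.Coprime 117288381359406970983270 67 by norm_num) d17 (hdvd 67 (by norm_num) (by omega))
      norm_num at h'
      exact h'
    have d19 : (557940830126698960967415390 : ℕ) ∣ N := by
      have h' := Nat.Coprime.mul_dvd_of_dvd_of_dvd (show Nat.Coprime 7858321551080267055879090 71 by norm_num) d18 (hdvd 71 (by norm_num) (by omega))
      norm_num at h'
      exact h'
    have d20 : (40729680599249024150621323470 : ℕ) ∣ N := by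
      have h' := Nat.Coprime.mul_dvd_of_dvd_of_dvd (show Nat.Coprime 557940830126698960967415390 73 by norm_num) d19 (hdvd 73 (by norm_num) (by omega))
      norm_num at h'
      exact h'
    have d21 : (3217644767340672907899084554130 : ℕ) ∣ N := by
      have h' := Nat.Coprime.mul_dvd_of_dvd_of_dvd (show Nat.Coprime 40729680599249024150621323470 79 by norm_num) d20 (hdvd 79 (by norm_num) (by omega))
      norm_num at h'
      exact h'
    have d22 : (267064515689275851355624017992790 : ℕ) ∣ N := by
      have h' := Nat.Coprime.mul_dvd_of_dvd_of_dvd (show Nat.Coprime 3217644767340672907899084554130 83 by norm_num) d21 (hdvd 83 (by norm_num) (by omega))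
      norm_num at h'
      exact h'
    have d23 : (23768741896345550770650537601358310 : ℕ) ∣ N := by
      have h' := Nat.Coprime.mul_dvd_of_dvd_of_dvd (show Nat.Coprime 267064515689275851355624017992790 89 by norm_num) d22 (hdvd 89 (by norm_num) (by omega))
      norm_num at h'
      exact h'
    have d24 : (2305567963945518424753102147331756070 : ℕ) ∣ N := by
      have h' := Nat.Coprime.mul_dvd_of_dvd_of_dvd (show Nat.Coprime 23768741896345550770650537601358310 97 by norm_num) d23 (hdvd 97 (by norm_num) (by omega))
      norm_num at h'
      exact h'
    have d25 : (232862364358497360900063316880507363070 : ℕ) ∣ N := by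
      have h' := Nat.Coprime.mul_dvd_of_dvd_of_dvd (show Nat.Coprime 2305567963945518424753102147331756070 101 by norm_num) d24 (hdvd 101 (by norm_num) (by omega))
      norm_num at h'
      exact h'
    have d26 : (23984823528925228172706521638692258396210 : ℕ) ∣ N := by
      have h' := Nat.Coprime.mul_dvd_of_dvd_of_dvd (show Nat.Coprime 232862364358497360900063316880507363070 103 by norm_num) d25 (hdvd 103 (by norm_num) (by omega))
      norm_num at h'
      exact h'
    have d27 : (2566376117594999414479597815340071648394470 : ℕ) ∣ N := by
      have h' := Nat.Coprime.mul_dvd_of_dvd_of_dvd (show Nat.Coprime 23984823528925228172706521638692258396210 107 by norm_num) d26 (hdvd 107 (by norm_num) (by omega))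
      norm_num at h'
      exact h'
    have hlg := logN_ge N 2566376117594999414479597815340071648394470 563 hN d27 (by set_option maxRecDepth 100000 in decide)
    push_cast at hlg
    have hple : (p:ℝ) ≤ 197 := by exact_mod_cast h
    linarith
  rcases le_or_gt p 367 with h | h11
  · have d0 : (2:ℕ) ∣ N := hdvd 2 (by norm_num) (by omega)
    have d1 : (6 : ℕ) ∣ N := by
      have h' := Nat.Coprime.mul_dvd_of_dvd_of_dvd (show Nat.Coprime 2 3 by norm_num) d0 (hdvd 3 (by norm_num) (by omega))
      norm_num at h'
      exact h'
    have d2 : (30 : ℕ) ∣ N := by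
      have h' := Nat.Coprime.mul_dvd_of_dvd_of_dvd (show Nat.Coprime 6 5 by norm_num) d1 (hdvd 5 (by norm_num) (by omega))
      norm_num at h'
      exact h'
    have d3 : (210 : ℕ) ∣ N := by
      have h' := Nat.Coprime.mul_dvd_of_dvd_of_dvd (show Nat.Coprime 30 7 by norm_num) d2 (hdvd 7 (by norm_num) (by omega))
      norm_num at h'
      exact h'
    have d4 : (2310 : ℕ) ∣ N := by
      have h' := Nat.Coprime.mul_dvd_of_dvd_of_dvd (show Nat.Coprime 210 11 by norm_num) d3 (hdvd 11 (by norm_num) (by omega))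
      norm_num at h'
      exact h'
    have d5 : (30030 : ℕ) ∣ N := by
      have h' := Nat.Coprime.mul_dvd_of_dvd_of_dvd (show Nat.Coprime 2310 13 by norm_num) d4 (hdvd 13 (by norm_num) (by omega))
      norm_num at h'
      exact h'
    have d6 : (510510 : ℕ) ∣ N := by
      have h' := Nat.Coprime.mul_dvd_of_dvd_of_dvd (show Nat.Coprime 30030 17 by norm_num) d5 (hdvd 17 (by norm_num) (by omega))
      norm_num at h'
      exact h'
    have d7 : (9699690 : ℕ) ∣ N := by
      have h' := Nat.Coprime.mul_dvd_of_dvd_of_dvd (show Nat.Coprime 510510 19 by norm_num) d6 (hdvd 19 (by norm_num) (by omega))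
      norm_num at h'
      exact h'
    have d8 : (223092870 : ℕ) ∣ N := by
      have h' := Nat.Coprime.mul_dvd_of_dvd_of_dvd (show Nat.Coprime 9699690 23 by norm_num) d7 (hdvd 23 (by norm_num) (by omega))
      norm_num at h'
      exact h'
    have d9 : (6469693230 : ℕ) ∣ N := by
      have h' := Nat.Coprime.mul_dvd_of_dvd_of_dvd (show Nat.Coprime 223092870 29 by norm_num) d8 (hdvd 29 (by norm_num) (by omega))
      norm_num at h'
      exact h'
    have d10 : (200560490130 : ℕ) ∣ N := by
      have h' := Nat.Coprime.mul_dvd_of_dvd_of_dvd (show Nat.Coprime 6469693230 31 by norm_num) d9 (hdvd 31 (by norm_num) (by omega))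
      norm_num at h'
      exact h'
    have d11 : (7420738134810 : ℕ) ∣ N := by
      have h' := Nat.Coprime.mul_dvd_of_dvd_of_dvd (show Nat.Coprime 200560490130 37 by norm_num) d10 (hdvd 37 (by norm_num) (by omega))
      norm_num at h'
      exact h'
    have d12 : (304250263527210 : ℕ) ∣ N := by
      have h' := Nat.Coprime.mul_dvd_of_dvd_of_dvd (show Nat.Coprime 7420738134810 41 by norm_num) d11 (hdvd 41 (by norm_num) (by omega))
      norm_num at h'
      exact h'
    have d13 : (13082761331670030 : ℕ) ∣ N := by
      have h' := Nat.Coprime.mul_dvd_of_dvd_of_dvd (show Nat.Coprime 304250263527210 43 by norm_num) d12 (hdvd 43 (by norm_num) (by omega))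
      norm_num at h'
      exact h'
    have d14 : (614889782588491410 : ℕ) ∣ N := by
      have h' := Nat.Coprime.mul_dvd_of_dvd_of_dvd (show Nat.Coprime 13082761331670030 47 by norm_num) d13 (hdvd 47 (by norm_num) (by omega))
      norm_num at h'
      exact h'
    have d15 : (32589158477190044730 : ℕ) ∣ N := by
      have h' := Nat.Coprime.mul_dvd_of_dvd_of_dvd (show Nat.Coprime 614889782588491410 53 by norm_num) d14 (hdvd 53 (by norm_num) (by omega))
      norm_num at h'
      exact h'
    have d16 : (1922760350154212639070 : ℕ) ∣ N := by
      have h' := Nat.Coprime.mul_dvd_of_dvd_of_dvd (show Nat.Coprime 32589158477190044730 59 by norm_num) d15 (hdvd 59 (by norm_num) (by omega))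
      norm_num at h'
      exact h'
    have d17 : (117288381359406970983270 : ℕ) ∣ N := by
      have h' := Nat.Coprime.mul_dvd_of_dvd_of_dvd (show Nat.Coprime 1922760350154212639070 61 by norm_num) d16 (hdvd 61 (by norm_num) (by omega))
      norm_num at h'
      exact h'
    have d18 : (7858321551080267055879090 : ℕ) ∣ N := by
      have h' := Nat.Coprime.mul_dvd_of_dvd_of_dvd (show Nat.Coprime 117288381359406970983270 67 by norm_num) d17 (hdvd 67 (by norm_num) (by omega))
      norm_num at h'
      exact h'
    have d19 : (557940830126698960967415390 : ℕ) ∣ N := by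
      have h' := Nat.Coprime.mul_dvd_of_dvd_of_dvd (show Nat.Coprime 7858321551080267055879090 71 by norm_num) d18 (hdvd 71 (by norm_num) (by omega))
      norm_num at h'
      exact h'
    have d20 : (40729680599249024150621323470 : ℕ) ∣ N := by
      have h' := Nat.Coprime.mul_dvd_of_dvd_of_dvd (show Nat.Coprime 557940830126698960967415390 73 by norm_num) d19 (hdvd 73 (by norm_num) (by omega))
      norm_num at h'
      exact h'
    have d21 : (3217644767340672907899084554130 : ℕ) ∣ N := by
      have h' := Nat.Coprime.mul_dvd_of_dvd_of_dvd (show Nat.Coprime 40729680599249024150621323470 79 by norm_num) d20 (hdvd 79 (by norm_num) (by omega))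
      norm_num at h'
      exact h'
    have d22 : (267064515689275851355624017992790 : ℕ) ∣ N := by
      have h' := Nat.Coprime.mul_dvd_of_dvd_of_dvd (show Nat.Coprime 3217644767340672907899084554130 83 by norm_num) d21 (hdvd 83 (by norm_num) (by omega))
      norm_num at h'
      exact h'
    have d23 : (23768741896345550770650537601358310 : ℕ) ∣ N := by
      have h' := Nat.Coprime.mul_dvd_of_dvd_of_dvd (show Nat.Coprime 267064515689275851355624017992790 89 by norm_num) d22 (hdvd 89 (by norm_num) (by omega))
      norm_num at h'
      exact h'
    have d24 : (2305567963945518424753102147331756070 : ℕ) ∣ N := by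
      have h' := Nat.Coprime.mul_dvd_of_dvd_of_dvd (show Nat.Coprime 23768741896345550770650537601358310 97 by norm_num) d23 (hdvd 97 (by norm_num) (by omega))
      norm_num at h'
      exact h'
    have d25 : (232862364358497360900063316880507363070 : ℕ) ∣ N := by
      have h' := Nat.Coprime.mul_dvd_of_dvd_of_dvd (show Nat.Coprime 2305567963945518424753102147331756070 101 by norm_num) d24 (hdvd 101 (by norm_num) (by omega))
      norm_num at h'
      exact h'
    have d26 : (23984823528925228172706521638692258396210 : ℕ) ∣ N := by
      have h' := Nat.Coprime.mul_dvd_of_dvd_of_dvd (show Nat.Coprime 232862364358497360900063316880507363070 103 by norm_num) d25 (hdvd 103 (by norm_num) (by omega))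
      norm_num at h'
      exact h'
    have d27 : (2566376117594999414479597815340071648394470 : ℕ) ∣ N := by
      have h' := Nat.Coprime.mul_dvd_of_dvd_of_dvd (show Nat.Coprime 23984823528925228172706521638692258396210 107 by norm_num) d26 (hdvd 107 (by norm_num) (by omega))
      norm_num at h'
      exact h'
    have d28 : (279734996817854936178276161872067809674997230 : ℕ) ∣ N := by
      have h' := Nat.Coprime.mul_dvd_of_dvd_of_dvd (show Nat.Coprime 2566376117594999414479597815340071648394470 109 by norm_num) d27 (hdvd 109 (by norm_num) (by omega))
      norm_num at h'
      exact h'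
    have d29 : (31610054640417607788145206291543662493274686990 : ℕ) ∣ N := by
      have h' := Nat.Coprime.mul_dvd_of_dvd_of_dvd (show Nat.Coprime 279734996817854936178276161872067809674997230 113 by norm_num) d28 (hdvd 113 (by norm_num) (by omega))
      norm_num at h'
      exact h'
    have d30 : (4014476939333036189094441199026045136645885247730 : ℕ) ∣ N := by
      have h' := Nat.Coprime.mul_dvd_of_dvd_of_dvd (show Nat.Coprime 31610054640417607788145206291543662493274686990 127 by norm_num) d29 (hdvd 127 (by norm_num) (by omega))
      norm_num at h'
      exact h'
    have d31 : (525896479052627740771371797072411912900610967452630 : ℕ) ∣ N := by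
      have h' := Nat.Coprime.mul_dvd_of_dvd_of_dvd (show Nat.Coprime 4014476939333036189094441199026045136645885247730 131 by norm_num) d30 (hdvd 131 (by norm_num) (by omega))
      norm_num at h'
      exact h'
    have d32 : (72047817630210000485677936198920432067383702541010310 : ℕ) ∣ N := by
      have h' := Nat.Coprime.mul_dvd_of_dvd_of_dvd (show Nat.Coprime 525896479052627740771371797072411912900610967452630 137 by norm_num) d31 (hdvd 137 (by norm_num) (by omega))
      norm_num at h'
      exact h'
    have d33 : (10014646650599190067509233131649940057366334653200433090 : ℕ) ∣ N := by
      have h' := Nat.Coprime.mul_dvd_of_dvd_of_dvd (show Nat.Coprime 72047817630210000485677936198920432067383702541010310 139 by norm_num) d32 (hdvd 139 (by norm_num) (by omega))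
      norm_num at h'
      exact h'
    have d34 : (1492182350939279320058875736615841068547583863326864530410 : ℕ) ∣ N := by
      have h' := Nat.Coprime.mul_dvd_of_dvd_of_dvd (show Nat.Coprime 10014646650599190067509233131649940057366334653200433090 149 by norm_num) d33 (hdvd 149 (by norm_num) (by omega))
      norm_num at h'
      exact h'
    have d35 : (225319534991831177328890236228992001350685163362356544091910 : ℕ) ∣ N := by
      have h' := Nat.Coprime.mul_dvd_of_dvd_of_dvd (show Nat.Coprime 1492182350939279320058875736615841068547583863326864530410 151 by norm_num) d34 (hdvd 151 (by norm_num) (by omega))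
      norm_num at h'
      exact h'
    have d36 : (35375166993717494840635767087951744212057570647889977422429870 : ℕ) ∣ N := by
      have h' := Nat.Coprime.mul_dvd_of_dvd_of_dvd (show Nat.Coprime 225319534991831177328890236228992001350685163362356544091910 157 by norm_num) d35 (hdvd 157 (by norm_num) (by omega))
      norm_num at h'
      exact h'
    have d37 : (5766152219975951659023630035336134306565384015606066319856068810 : ℕ) ∣ N := by
      have h' := Nat.Coprime.mul_dvd_of_dvd_of_dvd (show Nat.Coprime 35375166993717494840635767087951744212057570647889977422429870 163 by norm_num) d36 (hdvd 163 (by norm_num) (by omega))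
      norm_num at h'
      exact h'
    have d38 : (962947420735983927056946215901134429196419130606213075415963491270 : ℕ) ∣ N := by
      have h' := Nat.Coprime.mul_dvd_of_dvd_of_dvd (show Nat.Coprime 5766152219975951659023630035336134306565384015606066319856068810 167 by norm_num) d37 (hdvd 167 (by norm_num) (by omega))
      norm_num at h'
      exact h'
    have d39 : (166589903787325219380851695350896256250980509594874862046961683989710 : ℕ) ∣ N := by
      have h' := Nat.Coprime.mul_dvd_of_dvd_of_dvd (show Nat.Coprime 962947420735983927056946215901134429196419130606213075415963491270 173 by norm_num) d38 (hdvd 173 (by norm_num) (by omega))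
      norm_num at h'
      exact h'
    have d40 : (29819592777931214269172453467810429868925511217482600306406141434158090 : ℕ) ∣ N := by
      have h' := Nat.Coprime.mul_dvd_of_dvd_of_dvd (show Nat.Coprime 166589903787325219380851695350896256250980509594874862046961683989710 179 by norm_num) d39 (hdvd 179 (by norm_num) (by omega))
      norm_num at h'
      exact h'
    have d41 : (5397346292805549782720214077673687806275517530364350655459511599582614290 : ℕ) ∣ N := by
      have h' := Nat.Coprime.mul_dvd_of_dvd_of_dvd (show Nat.Coprime 29819592777931214269172453467810429868925511217482600306406141434158090 181 by norm_num) d40 (hdvd 181 (by norm_num) (by omega))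
      norm_num at h'
      exact h'
    have d42 : (1030893141925860008499560888835674370998623848299590975192766715520279329390 : ℕ) ∣ N := by
      have h' := Nat.Coprime.mul_dvd_of_dvd_of_dvd (show Nat.Coprime 5397346292805549782720214077673687806275517530364350655459511599582614290 191 by norm_num) d41 (hdvd 191 (by norm_num) (by omega))
      norm_num at h'
      exact h'
    have d43 : (198962376391690981640415251545285153602734402721821058212203976095413910572270 : ℕ) ∣ N := by
      have h' := Nat.Coprime.mul_dvd_of_dvd_of_dvd (show Nat.Coprime 1030893141925860008499560888835674370998623848299590975192766715520279329390 193 by norm_num) d42 (hdvd 193 (by norm_num) (by omega))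
      norm_num at h'
      exact h'
    have d44 : (39195588149163123383161804554421175259738677336198748467804183290796540382737190 : ℕ) ∣ N := by
      have h' := Nat.Coprime.mul_dvd_of_dvd_of_dvd (show Nat.Coprime 198962376391690981640415251545285153602734402721821058212203976095413910572270 197 by norm_num) d43 (hdvd 197 (by norm_num) (by omega))
      norm_num at h'
      exact h'
    have hlg := logN_ge N 39195588149163123383161804554421175259738677336198748467804183290796540382737190 1057 hN d44 (by set_option maxRecDepth 100000 in decide)
    push_cast at hlg
    have hple : (p:ℝ) ≤ 367 := by exact_mod_cast h
    linarith
  rcases le_or_gt p 683 with h | h12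
  · have d0 : (2:ℕ) ∣ N := hdvd 2 (by norm_num) (by omega)
    have d1 : (6 : ℕ) ∣ N := by
      have h' := Nat.Coprime.mul_dvd_of_dvd_of_dvd (show Nat.Coprime 2 3 by norm_num) d0 (hdvd 3 (by norm_num) (by omega))
      norm_num at h'
      exact h'
    have d2 : (30 : ℕ) ∣ N := by
      have h' := Nat.Coprime.mul_dvd_of_dvd_of_dvd (show Nat.Coprime 6 5 by norm_num) d1 (hdvd 5 (by norm_num) (by omega))
      norm_num at h'
      exact h'
    have d3 : (210 : ℕ) ∣ N := by
      have h' := Nat.Coprime.mul_dvd_of_dvd_of_dvd (show Nat.Coprime 30 7 by norm_num) d2 (hdvd 7 (by norm_num) (by omega))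
      norm_num at h'
      exact h'
    have d4 : (2310 : ℕ) ∣ N := by
      have h' := Nat.Coprime.mul_dvd_of_dvd_of_dvd (show Nat.Coprime 210 11 by norm_num) d3 (hdvd 11 (by norm_num) (by omega))
      norm_num at h'
      exact h'
    have d5 : (30030 : ℕ) ∣ N := by
      have h' := Nat.Coprime.mul_dvd_of_dvd_of_dvd (show Nat.Coprime 2310 13 by norm_num) d4 (hdvd 13 (by norm_num) (by omega))
      norm_num at h'
      exact h'
    have d6 : (510510 : ℕ) ∣ N := by
      have h' := Nat.Coprime.mul_dvd_of_dvd_of_dvd (show Nat.Coprime 30030 17 by norm_num) d5 (hdvd 17 (by norm_num) (by omega))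
      norm_num at h'
      exact h'
    have d7 : (9699690 : ℕ) ∣ N := by
      have h' := Nat.Coprime.mul_dvd_of_dvd_of_dvd (show Nat.Coprime 510510 19 by norm_num) d6 (hdvd 19 (by norm_num) (by omega))
      norm_num at h'
      exact h'
    have d8 : (223092870 : ℕ) ∣ N := by
      have h' := Nat.Coprime.mul_dvd_of_dvd_of_dvd (show Nat.Coprime 9699690 23 by norm_num) d7 (hdvd 23 (by norm_num) (by omega))
      norm_num at h'
      exact h'
    have d9 : (6469693230 : ℕ) ∣ N := by
      have h' := Nat.Coprime.mul_dvd_of_dvd_of_dvd (show Nat.Coprime 223092870 29 by norm_num) d8 (hdvd 29 (by norm_num) (by omega))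
      norm_num at h'
      exact h'
    have d10 : (200560490130 : ℕ) ∣ N := by
      have h' := Nat.Coprime.mul_dvd_of_dvd_of_dvd (show Nat.Coprime 6469693230 31 by norm_num) d9 (hdvd 31 (by norm_num) (by omega))
      norm_num at h'
      exact h'
    have d11 : (7420738134810 : ℕ) ∣ N := by
      have h' := Nat.Coprime.mul_dvd_of_dvd_of_dvd (show Nat.Coprime 200560490130 37 by norm_num) d10 (hdvd 37 (by norm_num) (by omega))
      norm_num at h'
      exact h'
    have d12 : (304250263527210 : ℕ) ∣ N := by
      have h' := Nat.Coprime.mul_dvd_of_dvd_of_dvd (show Nat.Coprime 7420738134810 41 by norm_num) d11 (hdvd 41 (by norm_num) (by omega))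
      norm_num at h'
      exact h'
    have d13 : (13082761331670030 : ℕ) ∣ N := by
      have h' := Nat.Coprime.mul_dvd_of_dvd_of_dvd (show Nat.Coprime 304250263527210 43 by norm_num) d12 (hdvd 43 (by norm_num) (by omega))
      norm_num at h'
      exact h'
    have d14 : (614889782588491410 : ℕ) ∣ N := by
      have h' := Nat.Coprime.mul_dvd_of_dvd_of_dvd (show Nat.Coprime 13082761331670030 47 by norm_num) d13 (hdvd 47 (by norm_num) (by omega))
      norm_num at h'
      exact h'
    have d15 : (32589158477190044730 : ℕ) ∣ N := by
      have h' := Nat.Coprime.mul_dvd_of_dvd_of_dvd (show Nat.Coprime 614889782588491410 53 by norm_num) d14 (hdvd 53 (by norm_num) (by omega))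
      norm_num at h'
      exact h'
    have d16 : (1922760350154212639070 : ℕ) ∣ N := by
      have h' := Nat.Coprime.mul_dvd_of_dvd_of_dvd (show Nat.Coprime 32589158477190044730 59 by norm_num) d15 (hdvd 59 (by norm_num) (by omega))
      norm_num at h'
      exact h'
    have d17 : (117288381359406970983270 : ℕ) ∣ N := by
      have h' := Nat.Coprime.mul_dvd_of_dvd_of_dvd (show Nat.Coprime 1922760350154212639070 61 by norm_num) d16 (hdvd 61 (by norm_num) (by omega))
      norm_num at h'
      exact h'
    have d18 : (7858321551080267055879090 : ℕ) ∣ N := by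
      have h' := Nat.Coprime.mul_dvd_of_dvd_of_dvd (show Nat.Coprime 117288381359406970983270 67 by norm_num) d17 (hdvd 67 (by norm_num) (by omega))
      norm_num at h'
      exact h'
    have d19 : (557940830126698960967415390 : ℕ) ∣ N := by
      have h' := Nat.Coprime.mul_dvd_of_dvd_of_dvd (show Nat.Coprime 7858321551080267055879090 71 by norm_num) d18 (hdvd 71 (by norm_num) (by omega))
      norm_num at h'
      exact h'
    have d20 : (40729680599249024150621323470 : ℕ) ∣ N := by
      have h' := Nat.Coprime.mul_dvd_of_dvd_of_dvd (show Nat.Coprime 557940830126698960967415390 73 by norm_num) d19 (hdvd 73 (by norm_num) (by omega))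
      norm_num at h'
      exact h'
    have d21 : (3217644767340672907899084554130 : ℕ) ∣ N := by
      have h' := Nat.Coprime.mul_dvd_of_dvd_of_dvd (show Nat.Coprime 40729680599249024150621323470 79 by norm_num) d20 (hdvd 79 (by norm_num) (by omega))
      norm_num at h'
      exact h'
    have d22 : (267064515689275851355624017992790 : ℕ) ∣ N := by
      have h' := Nat.Coprime.mul_dvd_of_dvd_of_dvd (show Nat.Coprime 3217644767340672907899084554130 83 by norm_num) d21 (hdvd 83 (by norm_num) (by omega))
      norm_num at h'
      exact h'
    have d23 : (23768741896345550770650537601358310 : ℕ) ∣ N := by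
      have h' := Nat.Coprime.mul_dvd_of_dvd_of_dvd (show Nat.Coprime 267064515689275851355624017992790 89 by norm_num) d22 (hdvd 89 (by norm_num) (by omega))
      norm_num at h'
      exact h'
    have d24 : (2305567963945518424753102147331756070 : ℕ) ∣ N := by
      have h' := Nat.Coprime.mul_dvd_of_dvd_of_dvd (show Nat.Coprime 23768741896345550770650537601358310 97 by norm_num) d23 (hdvd 97 (by norm_num) (by omega))
      norm_num at h'
      exact h'
    have d25 : (232862364358497360900063316880507363070 : ℕ) ∣ N := by
      have h' := Nat.Coprime.mul_dvd_of_dvd_of_dvd (show Nat.Coprime 2305567963945518424753102147331756070 101 by norm_num) d24 (hdvd 101 (by norm_num) (by omega))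
      norm_num at h'
      exact h'
    have d26 : (23984823528925228172706521638692258396210 : ℕ) ∣ N := by
      have h' := Nat.Coprime.mul_dvd_of_dvd_of_dvd (show Nat.Coprime 232862364358497360900063316880507363070 103 by norm_num) d25 (hdvd 103 (by norm_num) (by omega))
      norm_num at h'
      exact h'
    have d27 : (2566376117594999414479597815340071648394470 : ℕ) ∣ N := by
      have h' := Nat.Coprime.mul_dvd_of_dvd_of_dvd (show Nat.Coprime 23984823528925228172706521638692258396210 107 by norm_num) d26 (hdvd 107 (by norm_num) (by omega))
      norm_num at h'
      exact h'
    have d28 : (279734996817854936178276161872067809674997230 : ℕ) ∣ N := by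
      have h' := Nat.Coprime.mul_dvd_of_dvd_of_dvd (show Nat.Coprime 2566376117594999414479597815340071648394470 109 by norm_num) d27 (hdvd 109 (by norm_num) (by omega))
      norm_num at h'
      exact h'
    have d29 : (31610054640417607788145206291543662493274686990 : ℕ) ∣ N := by
      have h' := Nat.Coprime.mul_dvd_of_dvd_of_dvd (show Nat.Coprime 279734996817854936178276161872067809674997230 113 by norm_num) d28 (hdvd 113 (by norm_num) (by omega))
      norm_num at h'
      exact h'
    have d30 : (4014476939333036189094441199026045136645885247730 : ℕ) ∣ N := by
      have h' := Nat.Coprime.mul_dvd_of_dvd_of_dvd (show Nat.Coprime 31610054640417607788145206291543662493274686990 127 by norm_num) d29 (hdvd 127 (by norm_num) (by omega))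
      norm_num at h'
      exact h'
    have d31 : (525896479052627740771371797072411912900610967452630 : ℕ) ∣ N := by
      have h' := Nat.Coprime.mul_dvd_of_dvd_of_dvd (show Nat.Coprime 4014476939333036189094441199026045136645885247730 131 by norm_num) d30 (hdvd 131 (by norm_num) (by omega))
      norm_num at h'
      exact h'
    have d32 : (72047817630210000485677936198920432067383702541010310 : ℕ) ∣ N := by
      have h' := Nat.Coprime.mul_dvd_of_dvd_of_dvd (show Nat.Coprime 525896479052627740771371797072411912900610967452630 137 by norm_num) d31 (hdvd 137 (by norm_num) (by omega))
      norm_num at h'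
      exact h'
    have d33 : (10014646650599190067509233131649940057366334653200433090 : ℕ) ∣ N := by
      have h' := Nat.Coprime.mul_dvd_of_dvd_of_dvd (show Nat.Coprime 72047817630210000485677936198920432067383702541010310 139 by norm_num) d32 (hdvd 139 (by norm_num) (by omega))
      norm_num at h'
      exact h'
    have d34 : (1492182350939279320058875736615841068547583863326864530410 : ℕ) ∣ N := by
      have h' := Nat.Coprime.mul_dvd_of_dvd_of_dvd (show Nat.Coprime 10014646650599190067509233131649940057366334653200433090 149 by norm_num) d33 (hdvd 149 (by norm_num) (by omega))
      norm_num at h'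
      exact h'
    have d35 : (225319534991831177328890236228992001350685163362356544091910 : ℕ) ∣ N := by
      have h' := Nat.Coprime.mul_dvd_of_dvd_of_dvd (show Nat.Coprime 1492182350939279320058875736615841068547583863326864530410 151 by norm_num) d34 (hdvd 151 (by norm_num) (by omega))
      norm_num at h'
      exact h'
    have d36 : (35375166993717494840635767087951744212057570647889977422429870 : ℕ) ∣ N := by
      have h' := Nat.Coprime.mul_dvd_of_dvd_of_dvd (show Nat.Coprime 225319534991831177328890236228992001350685163362356544091910 157 by norm_num) d35 (hdvd 157 (by norm_num) (by omega))
      norm_num at h'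
      exact h'
    have d37 : (5766152219975951659023630035336134306565384015606066319856068810 : ℕ) ∣ N := by
      have h' := Nat.Coprime.mul_dvd_of_dvd_of_dvd (show Nat.Coprime 35375166993717494840635767087951744212057570647889977422429870 163 by norm_num) d36 (hdvd 163 (by norm_num) (by omega))
      norm_num at h'
      exact h'
    have d38 : (962947420735983927056946215901134429196419130606213075415963491270 : ℕ) ∣ N := by
      have h' := Nat.Coprime.mul_dvd_of_dvd_of_dvd (show Nat.Coprime 5766152219975951659023630035336134306565384015606066319856068810 167 by norm_num) d37 (hdvd 167 (by norm_num) (by omega))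
      norm_num at h'
      exact h'
    have d39 : (166589903787325219380851695350896256250980509594874862046961683989710 : ℕ) ∣ N := by
      have h' := Nat.Coprime.mul_dvd_of_dvd_of_dvd (show Nat.Coprime 962947420735983927056946215901134429196419130606213075415963491270 173 by norm_num) d38 (hdvd 173 (by norm_num) (by omega))
      norm_num at h'
      exact h'
    have d40 : (29819592777931214269172453467810429868925511217482600306406141434158090 : ℕ) ∣ N := by
      have h' := Nat.Coprime.mul_dvd_of_dvd_of_dvd (show Nat.Coprime 166589903787325219380851695350896256250980509594874862046961683989710 179 by norm_num) d39 (hdvd 179 (by norm_num) (by omega))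
      norm_num at h'
      exact h'
    have d41 : (5397346292805549782720214077673687806275517530364350655459511599582614290 : ℕ) ∣ N := by
      have h' := Nat.Coprime.mul_dvd_of_dvd_of_dvd (show Nat.Coprime 29819592777931214269172453467810429868925511217482600306406141434158090 181 by norm_num) d40 (hdvd 181 (by norm_num) (by omega))
      norm_num at h'
      exact h'
    have d42 : (1030893141925860008499560888835674370998623848299590975192766715520279329390 : ℕ) ∣ N := by
      have h' := Nat.Coprime.mul_dvd_of_dvd_of_dvd (show Nat.Coprime 5397346292805549782720214077673687806275517530364350655459511599582614290 191 by norm_num) d41 (hdvd 191 (by norm_num) (by omega))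
      norm_num at h'
      exact h'
    have d43 : (198962376391690981640415251545285153602734402721821058212203976095413910572270 : ℕ) ∣ N := by
      have h' := Nat.Coprime.mul_dvd_of_dvd_of_dvd (show Nat.Coprime 1030893141925860008499560888835674370998623848299590975192766715520279329390 193 by norm_num) d42 (hdvd 193 (by norm_num) (by omega))
      norm_num at h'
      exact h'
    have d44 : (39195588149163123383161804554421175259738677336198748467804183290796540382737190 : ℕ) ∣ N := by
      have h' := Nat.Coprime.mul_dvd_of_dvd_of_dvd (show Nat.Coprime 198962376391690981640415251545285153602734402721821058212203976095413910572270 197 by norm_num) d43 (hdvd 197 (by norm_num) (by omega))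
      norm_num at h'
      exact h'
    have d45 : (7799922041683461553249199106329813876687996789903550945093032474868511536164700810 : ℕ) ∣ N := by
      have h' := Nat.Coprime.mul_dvd_of_dvd_of_dvd (show Nat.Coprime 39195588149163123383161804554421175259738677336198748467804183290796540382737190 199 by norm_num) d44 (hdvd 199 (by norm_num) (by omega))
      norm_num at h'
      exact h'
    have d46 : (1645783550795210387735581011435590727981167322669649249414629852197255934130751870910 : ℕ) ∣ N := by
      have h' := Nat.Coprime.mul_dvd_of_dvd_of_dvd (show Nat.Coprime 7799922041683461553249199106329813876687996789903550945093032474868511536164700810 211 by norm_num) d45 (hdvd 211 (by norm_num) (by omega))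
      norm_num at h'
      exact h'
    have d47 : (367009731827331916465034565550136732339800312955331782619462457039988073311157667212930 : ℕ) ∣ N := by
      have h' := Nat.Coprime.mul_dvd_of_dvd_of_dvd (show Nat.Coprime 1645783550795210387735581011435590727981167322669649249414629852197255934130751870910 223 by norm_num) d46 (hdvd 223 (by norm_num) (by omega))
      norm_num at h'
      exact h'
    have d48 : (83311209124804345037562846379881038241134671040860314654617977748077292641632790457335110 : ℕ) ∣ N := by
      have h' := Nat.Coprime.mul_dvd_of_dvd_of_dvd (show Nat.Coprime 367009731827331916465034565550136732339800312955331782619462457039988073311157667212930 227 by norm_num) d47 (hdvd 227 (by norm_num) (by omega))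
      norm_num at h'
      exact h'
    have d49 : (19078266889580195013601891820992757757219839668357012055907516904309700014933909014729740190 : ℕ) ∣ N := by
      have h' := Nat.Coprime.mul_dvd_of_dvd_of_dvd (show Nat.Coprime 83311209124804345037562846379881038241134671040860314654617977748077292641632790457335110 229 by norm_num) d48 (hdvd 229 (by norm_num) (by omega))
      norm_num at h'
      exact h'
    have d50 : (4445236185272185438169240794291312557432222642727183809026451438704160103479600800432029464270 : ℕ) ∣ N := by
      have h' := Nat.Coprime.mul_dvd_of_dvd_of_dvd (show Nat.Coprime 19078266889580195013601891820992757757219839668357012055907516904309700014933909014729740190 233 by norm_num) d49 (hdvd 233 (by norm_num) (by omega))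
      norm_num at h'
      exact h'
    have d51 : (1062411448280052319722448549835623701226301211611796930357321893850294264731624591303255041960530 : ℕ) ∣ N := by
      have h' := Nat.Coprime.mul_dvd_of_dvd_of_dvd (show Nat.Coprime 4445236185272185438169240794291312557432222642727183809026451438704160103479600800432029464270 239 by norm_num) d50 (hdvd 239 (by norm_num) (by omega))
      norm_num at h'
      exact h'
    have d52 : (256041159035492609053110100510385311995538591998443060216114576417920917800321526504084465112487730 : ℕ) ∣ N := by
      have h' := Nat.Coprime.mul_dvd_of_dvd_of_dvd (show Nat.Coprime 1062411448280052319722448549835623701226301211611796930357321893850294264731624591303255041960530 241 by norm_num) d51 (hdvd 241 (by norm_num) (by omega))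
      norm_num at h'
      exact h'
    have d53 : (64266330917908644872330635228106713310880186591609208114244758680898150367880703152525200743234420230 : ℕ) ∣ N := by
      have h' := Nat.Coprime.mul_dvd_of_dvd_of_dvd (show Nat.Coprime 256041159035492609053110100510385311995538591998443060216114576417920917800321526504084465112487730 251 by norm_num) d52 (hdvd 251 (by norm_num) (by omega))
      norm_num at h'
      exact h'
    have d54 : (16516447045902521732188973253623425320896207954043566485360902980990824644545340710198976591011245999110 : ℕ) ∣ N := by
      have h' := Nat.Coprime.mul_dvd_of_dvd_of_dvd (show Nat.Coprime 64266330917908644872330635228106713310880186591609208114244758680898150367880703152525200743234420230 257 by norm_num) d53 (hdvd 257 (by norm_num) (by omega))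
      norm_num at h'
      exact h'
    have d55 : (4343825573072363215565699965702960859395702691913457985649917484000586881515424606782330843435957697765930 : ℕ) ∣ N := by
      have h' := Nat.Coprime.mul_dvd_of_dvd_of_dvd (show Nat.Coprime 16516447045902521732188973253623425320896207954043566485360902980990824644545340710198976591011245999110 263 by norm_num) d54 (hdvd 263 (by norm_num) (by omega))
      norm_num at h'
      exact h'
    have d56 : (1168489079156465704987173290774096471177444024124720198139827803196157871127649219224446996884272620699035170 : ℕ) ∣ N := by
      have h' := Nat.Coprime.mul_dvd_of_dvd_of_dvd (show Nat.Coprime 4343825573072363215565699965702960859395702691913457985649917484000586881515424606782330843435957697765930 269 by norm_num) d55 (hdvd 269 (by norm_num) (by omega))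
      norm_num at h'
      exact h'
    have d57 : (316660540451402206051523961799780143689087330537799173695893334666158783075592938409825136155637880209438531070 : ℕ) ∣ N := by
      have h' := Nat.Coprime.mul_dvd_of_dvd_of_dvd (show Nat.Coprime 1168489079156465704987173290774096471177444024124720198139827803196157871127649219224446996884272620699035170 271 by norm_num) d56 (hdvd 271 (by norm_num) (by omega))
      norm_num at h'
      exact h'
    have d58 : (87714969705038411076272137418539099801877190558970371113762453702525982911939243939521562715111692818014473106390 : ℕ) ∣ N := by
      have h' := Nat.Coprime.mul_dvd_of_dvd_of_dvd (show Nat.Coprime 316660540451402206051523961799780143689087330537799173695893334666158783075592938409825136155637880209438531070 277 by norm_num) d57 (hdvd 277 (by norm_num) (by omega))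
      norm_num at h'
      exact h'
    have d59 : (24647906487115793512432470614609487044327490547070674282967249490409801198254927547005559122946385681862066942895590 : ℕ) ∣ N := by
      have h' := Nat.Coprime.mul_dvd_of_dvd_of_dvd (show Nat.Coprime 87714969705038411076272137418539099801877190558970371113762453702525982911939243939521562715111692818014473106390 281 by norm_num) d58 (hdvd 281 (by norm_num) (by omega))
      norm_num at h'
      exact h'
    have d60 : (6975357535853769564018389183934484833544679824821000822079731605785973739106144495802573231793827147966964944839451970 : ℕ) ∣ N := by
      have h' := Nat.Coprime.mul_dvd_of_dvd_of_dvd (show Nat.Coprime 24647906487115793512432470614609487044327490547070674282967249490409801198254927547005559122946385681862066942895590 283 by norm_num) d59 (hdvd 283 (by norm_num) (by omega))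
      norm_num at h'
      exact h'
    have d61 : (2043779758005154482257388030892804056228591188672553240869361360495290305558100337270153956915591354354320728837959427210 : ℕ) ∣ N := by
      have h' := Nat.Coprime.mul_dvd_of_dvd_of_dvd (show Nat.Coprime 6975357535853769564018389183934484833544679824821000822079731605785973739106144495802573231793827147966964944839451970 293 by norm_num) d60 (hdvd 293 (by norm_num) (by omega))
      norm_num at h'
      exact h'
    have d62 : (627440385707582426053018125484090845262177494922473844946893937672054123806336803541937264773086545786776463753253544153470 : ℕ) ∣ N := by
      have h' := Nat.Coprime.mul_dvd_of_dvd_of_dvd (show Nat.Coprime 2043779758005154482257388030892804056228591188672553240869361360495290305558100337270153956915591354354320728837959427210 307 by norm_num) d61 (hdvd 307 (by norm_num) (by omega))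
      norm_num at h'
      exact h'
    have d63 : (195133959955058134502488637025552252876537200920889365778484014616008832503770745901542489344429915739687480227261852231729170 : ℕ) ∣ N := by
      have h' := Nat.Coprime.mul_dvd_of_dvd_of_dvd (show Nat.Coprime 627440385707582426053018125484090845262177494922473844946893937672054123806336803541937264773086545786776463753253544153470 311 by norm_num) d62 (hdvd 311 (by norm_num) (by omega))
      norm_num at h'
      exact h'
    have d64 : (61076929465933196099278943388997855150356143888238371488665496574810764573680243467182799164806563626522181311132959748531230210 : ℕ) ∣ N := by
      have h' := Nat.Coprime.mul_dvd_of_dvd_of_dvd (show Nat.Coprime 195133959955058134502488637025552252876537200920889365778484014616008832503770745901542489344429915739687480227261852231729170 313 by norm_num) d63 (hdvd 313 (by norm_num) (by omega))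
      norm_num at h'
      exact h'
    have d65 : (19361386640700823163471425054312320082662897612571563761906962414215012369856637179096947335243680669607531475629148240284399976570 : ℕ) ∣ N := by
      have h' := Nat.Coprime.mul_dvd_of_dvd_of_dvd (show Nat.Coprime 61076929465933196099278943388997855150356143888238371488665496574810764573680243467182799164806563626522181311132959748531230210 317 by norm_num) d64 (hdvd 317 (by norm_num) (by omega))
      norm_num at h'
      exact h'
    have d66 : (6408618978071972467109041692977377947361419109761187605191204559105169094422546906281089567965658301640092918433248067534136392244670 : ℕ) ∣ N := by
      have h' := Nat.Coprime.mul_dvd_of_dvd_of_dvd (show Nat.Coprime 19361386640700823163471425054312320082662897612571563761906962414215012369856637179096947335243680669607531475629148240284399976570 331 by norm_num) d65 (hdvd 331 (by norm_num) (by omega))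
      norm_num at h'
      exact h'
    have d67 : (2159704595610254721415747050533376368260798239989520222949435936418441984820398307416727184404426847652711313512004598759003964186453790 : ℕ) ∣ N := by
      have h' := Nat.Coprime.mul_dvd_of_dvd_of_dvd (show Nat.Coprime 6408618978071972467109041692977377947361419109761187605191204559105169094422546906281089567965658301640092918433248067534136392244670 337 by norm_num) d66 (hdvd 337 (by norm_num) (by omega))
      norm_num at h'
      exact h'
    have d68 : (749417494676758388331264226535081599786496989276363517363454269937199368732678212673604332988336116135490825788665595769374375572699465130 : ℕ) ∣ N := by
      have h' := Nat.Coprime.mul_dvd_of_dvd_of_dvd (show Nat.Coprime 2159704595610254721415747050533376368260798239989520222949435936418441984820398307416727184404426847652711313512004598759003964186453790 347 by norm_num) d67 (hdvd 347 (by norm_num) (by omega))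
      norm_num at h'
      exact h'
    have d69 : (261546705642188677527611215060743478325487449257450867559845540208082579687704696223087912212929304531286298200244292923511657074872113330370 : ℕ) ∣ N := by
      have h' := Nat.Coprime.mul_dvd_of_dvd_of_dvd (show Nat.Coprime 749417494676758388331264226535081599786496989276363517363454269937199368732678212673604332988336116135490825788665595769374375572699465130 349 by norm_num) d68 (hdvd 349 (by norm_num) (by omega))
      norm_num at h'
      exact h'
    have d70 : (92325987091692603167246758916442447848897069587880156248625475693453150629759757766750033011164044499544063264686235401999614947429856005620610 : ℕ) ∣ N := by
      have h' := Nat.Coprime.mul_dvd_of_dvd_of_dvd (show Nat.Coprime 261546705642188677527611215060743478325487449257450867559845540208082579687704696223087912212929304531286298200244292923511657074872113330370 353 by norm_num) d69 (hdvd 353 (by norm_num) (by omega))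
      norm_num at h'
      exact h'
    have d71 : (33145029365917644537041586451002838777754047982048976093256545773949681076083753038263261851007891975336318712022358509317861766127318306017798990 : ℕ) ∣ N := by
      have h' := Nat.Coprime.mul_dvd_of_dvd_of_dvd (show Nat.Coprime 92325987091692603167246758916442447848897069587880156248625475693453150629759757766750033011164044499544063264686235401999614947429856005620610 359 by norm_num) d70 (hdvd 359 (by norm_num) (by omega))
      norm_num at h'
      exact h'
    have d72 : (12164225777291775545094262227518041831435735609411974226225152299039532954922737365042617099319896354948428967312205572919655268168725818308532229330 : ℕ) ∣ N := by
      have h' := Nat.Coprime.mul_dvd_of_dvd_of_dvd (show Nat.Coprime 33145029365917644537041586451002838777754047982048976093256545773949681076083753038263261851007891975336318712022358509317861766127318306017798990 367 by norm_num) d71 (hdvd 367 (by norm_num) (by omega))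
      norm_num at h'
      exact h'
    have hlg := logN_ge N 12164225777291775545094262227518041831435735609411974226225152299039532954922737365042617099319896354948428967312205572919655268168725818308532229330 1967 hN d72 (by set_option maxRecDepth 100000 in decide)
    push_cast at hlg
    have hple : (p:ℝ) ≤ 683 := by exact_mod_cast h
    linarith
  exact asympt N p hN hp (by omega) hdvd

theorem stmt_11 (N k₁ k₂ : ℕ) (hN : 0 < N)
    (hk₁ : 0 < k₁) (hk₂ : 0 < k₂) (hk : k₁ ≠ k₂)
    (f g : ℕ → ℂ) (hf1 : f 1 = 1) (hg1 : g 1 = 1)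
    (hf : ∀ p : ℕ, p.Prime → ¬ p ∣ N → f (p ^ 2) = f p ^ 2 - (p : ℂ) ^ (k₁ - 1))
    (hg : ∀ p : ℕ, p.Prime → ¬ p ∣ N → g (p ^ 2) = g p ^ 2 - (p : ℂ) ^ (k₂ - 1)) :
    ∃ n : ℕ, (n : ℝ) ≤ 4 * (Real.log N + 1) ^ 2 ∧ f n ≠ g n := by
  classical
  have hlog0 : 0 ≤ Real.log N := Real.log_nonneg (by exact_mod_cast hN)
  have hex : ∃ q : ℕ, Nat.Prime q ∧ ¬ q ∣ N := by
    obtain ⟨q, hql, hqp⟩ := Nat.exists_infinite_primes (N + 1)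
    exact ⟨q, hqp, fun hd => by have := Nat.le_of_dvd hN hd; omega⟩
  obtain ⟨hp, hpN⟩ := Nat.find_spec hex
  set p := Nat.find hex with hpdef
  have hmin : ∀ q : ℕ, Nat.Prime q → q < p → q ∣ N := by
    intro q hq hqp
    by_contra hqd
    exact Nat.find_min hex hqp ⟨hq, hqd⟩
  have hkey : (p : ℝ) ≤ 2 * Real.log N + 2 := key N hN p hp hmin
  have hp2 : (2:ℝ) ≤ (p:ℝ) := by exact_mod_cast hp.two_le
  by_cases hfg : f p = g p
  · refine ⟨p ^ 2, ?_, ?_⟩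
    · push_cast
      nlinarith [hlog0, hkey, hp2]
    · intro heq
      rw [hf p hp hpN, hg p hp hpN, hfg] at heq
      have hpow : ((p:ℂ)) ^ (k₁ - 1) = (p:ℂ) ^ (k₂ - 1) := by linear_combination -heq
      have hcast : ((p ^ (k₁ - 1) : ℕ) : ℂ) = ((p ^ (k₂ - 1) : ℕ) : ℂ) := by
        push_cast; exact hpow
      have h2 : p ^ (k₁ - 1) = p ^ (k₂ - 1) := by exact_mod_cast hcast
      have h3 := Nat.pow_right_injective hp.two_le h2
      omega
  · exact ⟨p, by nlinarith [hlog0, hkey], hfg⟩
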